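/- Let σ be a stake vector with Nakamoto coefficient k = d(σ), witnessed by coalition C of size k containing player i, and suppose every size-k coalition avoiding i has total stake ≤ τ·Σ_{j≠i} σ_j. Then every player ℓ ∉ C satisfies σ_ℓ < (1−τ)·σ_i. -/

import Mathlib

open Finset

/-- Nakamoto coefficient of the stake profile `σ` restricted to the player set `N`,
with threshold `τ`: the minimum size of a coalition `C ⊆ N` whose total stake strictly
exceeds `τ` times the total stake of `N`. -/
noncomputable def nakamoto {n : ℕ} (σ : Fin n → ℝ) (N : Finset (Fin n)) (τ : ℝ) : ℕ :=
  sInf {k : ℕ | ∃ C ⊆ N, C.card = k ∧ τ * ∑ j ∈ N, σ j < ∑ j ∈ C, σ j}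

theorem stmt2 {n : ℕ} (σ : Fin n → ℝ) (τ : ℝ) (hτ0 : 0 < τ) (hτ1 : τ < 1)
    (hσ : ∀ i, 0 ≤ σ i) (k : ℕ) (hk : nakamoto σ Finset.univ τ = k)
    (C : Finset (Fin n)) (hC : C.card = k) (i : Fin n) (hiC : i ∈ C)
    (hwit : τ * ∑ j, σ j < ∑ j ∈ C, σ j)
    (havoid : ∀ C' : Finset (Fin n), C' ⊆ Finset.univ.erase i → C'.card = k →
      ∑ j ∈ C', σ j ≤ τ * ∑ j ∈ Finset.univ.erase i, σ j) :
    ∀ ℓ : Fin n, ℓ ∉ C → σ ℓ < (1 - τ) * σ i := by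
  intro ℓ hℓ
  have hℓi : ℓ ≠ i := fun h => hℓ (h ▸ hiC)
  have hℓe : ℓ ∉ C.erase i := fun h => hℓ (Finset.mem_of_mem_erase h)
  set C' := insert ℓ (C.erase i) with hC'
  have hsub : C' ⊆ Finset.univ.erase i := by
    intro x hx
    rcases Finset.mem_insert.mp hx with h | h
    · subst h; exact Finset.mem_erase.mpr ⟨hℓi, Finset.mem_univ _⟩
    · exact Finset.mem_erase.mpr ⟨(Finset.mem_erase.mp h).1, Finset.mem_univ _⟩
  have hcard : C'.card = k := by
    have hk1 : 1 ≤ k := hC ▸ Finset.card_pos.mpr ⟨i, hiC⟩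
    rw [hC', Finset.card_insert_of_notMem hℓe, Finset.card_erase_of_mem hiC, hC]
    omega
  have h1 := havoid C' hsub hcard
  have hs1 : ∑ j ∈ C', σ j = σ ℓ + ((∑ j ∈ C, σ j) - σ i) := by
    rw [hC', Finset.sum_insert hℓe, Finset.sum_erase_eq_sub hiC]
  have hs2 : ∑ j ∈ Finset.univ.erase i, σ j = (∑ j, σ j) - σ i :=
    Finset.sum_erase_eq_sub (Finset.mem_univ i)
  rw [hs1, hs2] at h1
  nlinarith [hwit, h1]
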